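/- Fix n ≥ 4. For r > 0 let R ∈ SL(2,ℝ) be the rotation matrix with entries R₁₁ = cos(π/n), R₁₂ = sin(π/n), R₂₁ = −sin(π/n), R₂₂ = cos(π/n), let p_r = e^r·i ∈ ℍ², and define the chain x_k(r) = R^k·p_r (action by fractional linear transformations) for 0 ≤ k ≤ n. Then τ(x₀(r),…,xₙ(r)) tends to infinity as r → ∞. -/

import Mathlib

open UpperHalfPlane Real Filter

/-- The tension of the chain `x 0, x 1, …, x n`:
`τ = Σ_{j=1}^{n−1} d(x_{j−1},x_{j+1}) − Σ_{j=2}^{n−1} d(x_{j−1},x_j) − d(x_0,x_n)`. -/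
noncomputable def tension (n : ℕ) (x : ℕ → UpperHalfPlane) : ℝ :=
  (∑ j ∈ Finset.range (n - 1), dist (x j) (x (j + 2)))
    - (∑ j ∈ Finset.range (n - 2), dist (x (j + 1)) (x (j + 2)))
    - dist (x 0) (x n)

/-- The Gromov product `⟨x,y⟩_z = (d(x,z)+d(z,y)−d(x,y))/2`. -/
noncomputable def gromov (x y z : UpperHalfPlane) : ℝ :=
  (dist x z + dist z y - dist x y) / 2

/-- A pair `(a,b)` is good if `a, b ≥ 0` and `sinh(a−b) > 2·sinh(a/2)`. -/
def GoodPair (a b : ℝ) : Prop :=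
  0 ≤ a ∧ 0 ≤ b ∧ Real.sinh (a - b) > 2 * Real.sinh (a / 2)

/-- The chain `x 0, …, x n` is `(a,b)`-good. -/
def GoodChain (a b : ℝ) (n : ℕ) (x : ℕ → UpperHalfPlane) : Prop :=
  (∀ j < n, dist (x (j + 1)) (x j) ≥ a) ∧
  (∀ j, 1 ≤ j → j + 1 ≤ n → gromov (x (j - 1)) (x (j + 1)) (x j) ≤ b)

/-- The point `e^r·i` of `ℍ²`. -/
noncomputable def expI (r : ℝ) : UpperHalfPlane := ⟨⟨0, Real.exp r⟩, Real.exp_pos r⟩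


lemma rot_dist (c s r : ℝ) (h1 : c ^ 2 + s ^ 2 = 1) (g : Matrix.SpecialLinearGroup (Fin 2) ℝ)
    (hg : (g : Matrix (Fin 2) (Fin 2) ℝ) = !![c, s; -s, c]) :
    dist (g • expI r) (expI r) = 2 * Real.arsinh (|s| * |Real.sinh r|) := by
  set y := Real.exp r with hy_def
  have hy : 0 < y := Real.exp_pos r
  have hz : ((expI r : UpperHalfPlane) : ℂ) = (y : ℂ) * Complex.I := by
    simp [expI, UpperHalfPlane.coe, Complex.ext_iff]
    exact hy_def.symm
  have hQ : 0 < c ^ 2 + s ^ 2 * y ^ 2 := by nlinarith [sq_nonneg c, sq_nonneg (s * y), sq_nonneg s]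
  set d : ℂ := -(s : ℂ) * ((y : ℂ) * Complex.I) + c with hd_def
  have hnormd : Complex.normSq d = c ^ 2 + s ^ 2 * y ^ 2 := by
    simp [hd_def, Complex.normSq_apply]
    ring
  have hd : d ≠ 0 := by
    intro h
    rw [h, map_zero] at hnormd
    exact hQ.ne' hnormd.symm
  have hw : ((g • expI r : UpperHalfPlane) : ℂ) = ((c : ℂ) * ((y:ℂ) * Complex.I) + s) / d := by
    rw [UpperHalfPlane.specialLinearGroup_apply]
    simp [hg, hz, hd_def]
  have hdiff : ((g • expI r : UpperHalfPlane) : ℂ) - ((expI r : UpperHalfPlane) : ℂ)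
      = ((s * (1 - y ^ 2) : ℝ) : ℂ) / d := by
    rw [hw, hz, div_sub' hd]
    congr 1
    rw [hd_def]
    push_cast
    ring_nf
    simp only [Complex.I_sq]
    push_cast
    ring
  have him : (g • expI r).im = y / (c ^ 2 + s ^ 2 * y ^ 2) := by
    have h' : (g • expI r).im = (((c : ℂ) * ((y:ℂ) * Complex.I) + s) / d).im := by
      rw [← UpperHalfPlane.coe_im, hw]
    rw [h', Complex.div_im, hnormd, hd_def]
    simp
    linear_combination (y * (c ^ 2 + y ^ 2 * s ^ 2)⁻¹) * h1
  have habs : dist ((g • expI r : UpperHalfPlane) : ℂ) ((expI r : UpperHalfPlane) : ℂ)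
      = |s| * |1 - y ^ 2| / Real.sqrt (c ^ 2 + s ^ 2 * y ^ 2) := by
    rw [Complex.dist_eq, hdiff, norm_div, Complex.norm_real, Real.norm_eq_abs, abs_mul]
    rw [Complex.norm_def, hnormd]
  have him0 : (expI r).im = y := rfl
  rw [UpperHalfPlane.dist_eq, habs, him, him0]
  have hsQ : 0 < Real.sqrt (c ^ 2 + s ^ 2 * y ^ 2) := Real.sqrt_pos.mpr hQ
  have hsq : Real.sqrt (y / (c ^ 2 + s ^ 2 * y ^ 2) * y)
      = y / Real.sqrt (c ^ 2 + s ^ 2 * y ^ 2) := by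
    rw [show y / (c ^ 2 + s ^ 2 * y ^ 2) * y = y ^ 2 / (c ^ 2 + s ^ 2 * y ^ 2) by ring,
      Real.sqrt_div (sq_nonneg y), Real.sqrt_sq hy.le]
  rw [hsq]
  congr 1
  have hsr : Real.sinh r = (y ^ 2 - 1) / (2 * y) := by
    rw [Real.sinh_eq, Real.exp_neg, ← hy_def]
    field_simp
  have habs2 : |Real.sinh r| = |1 - y ^ 2| / (2 * y) := by
    rw [hsr, abs_div, abs_of_pos (by positivity : (0:ℝ) < 2 * y), abs_sub_comm]
  rw [habs2]
  field_simp
  rw [show c ^ 2 + y ^ 2 * s ^ 2 = c ^ 2 + s ^ 2 * y ^ 2 by ring]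
  congr 1
  rw [div_eq_div_iff (mul_ne_zero (mul_ne_zero hy.ne' hsQ.ne') two_ne_zero)
    (mul_ne_zero hy.ne' two_ne_zero)]
  ring

lemma rot_pow (θ : ℝ) (R : Matrix.SpecialLinearGroup (Fin 2) ℝ)
    (hR : (R : Matrix (Fin 2) (Fin 2) ℝ) = !![Real.cos θ, Real.sin θ; -Real.sin θ, Real.cos θ])
    (k : ℕ) :
    ((R ^ k : Matrix.SpecialLinearGroup (Fin 2) ℝ) : Matrix (Fin 2) (Fin 2) ℝ)
      = !![Real.cos (k * θ), Real.sin (k * θ); -Real.sin (k * θ), Real.cos (k * θ)] := by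
  induction k with
  | zero => simp [Matrix.one_fin_two]
  | succ k ih =>
    have h : ((R ^ (k + 1) : Matrix.SpecialLinearGroup (Fin 2) ℝ) : Matrix (Fin 2) (Fin 2) ℝ)
        = ((R ^ k : Matrix.SpecialLinearGroup (Fin 2) ℝ) : Matrix (Fin 2) (Fin 2) ℝ)
          * (R : Matrix (Fin 2) (Fin 2) ℝ) := by
      rw [pow_succ]; rfl
    rw [h, ih, hR, Matrix.mul_fin_two]
    have hc : ((k + 1 : ℕ) : ℝ) * θ = k * θ + θ := by push_cast; ring
    rw [hc, Real.cos_add, Real.sin_add]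
    congr 1
    ring


/-- The tension of the regular hyperbolic `n`-gon chain inscribed in the circle of
radius `r` centered at `i` tends to infinity as `r → ∞`. -/
theorem regular_polygon_tension_tendsto_atTop (n : ℕ) (hn : 4 ≤ n)
    (R : Matrix.SpecialLinearGroup (Fin 2) ℝ)
    (hR : (R : Matrix (Fin 2) (Fin 2) ℝ) =
      !![Real.cos (π / n), Real.sin (π / n); -Real.sin (π / n), Real.cos (π / n)]) :
    Filter.Tendsto (fun r : ℝ => tension n (fun k => R ^ k • expI r))
      Filter.atTop Filter.atTop := by
  have hπ := Real.pi_pos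
  set θ := π / n with hθ
  have hn0 : (0:ℝ) < (n:ℝ) := by exact_mod_cast by omega
  have hθpos : 0 < θ := div_pos hπ hn0
  have hθle : θ ≤ π / 4 :=
    div_le_div_of_nonneg_left hπ.le (by norm_num) (by exact_mod_cast hn)
  -- key distance formula
  have key : ∀ (r : ℝ) (j k : ℕ), dist ((R ^ (j + k)) • expI r) ((R ^ j) • expI r)
      = 2 * Real.arsinh (|Real.sin (k * θ)| * |Real.sinh r|) := by
    intro r j k
    rw [pow_add, mul_smul, dist_smul]
    exact rot_dist _ _ r (by rw [← Real.sin_sq_add_cos_sq ((k:ℝ) * θ)]; ring) _ (rot_pow θ R hR k)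
  set F : ℝ → ℝ → ℝ := fun a r => 2 * Real.arsinh (|Real.sin (a * θ)| * |Real.sinh r|) with hF
  -- tension formula
  have htension : ∀ r : ℝ, tension n (fun k => R ^ k • expI r)
      = ((n - 1 : ℕ) : ℝ) * F 2 r - ((n - 2 : ℕ) : ℝ) * F 1 r := by
    intro r
    have e2 : ∀ j : ℕ, dist ((R ^ j) • expI r) ((R ^ (j + 2)) • expI r) = F 2 r := by
      intro j
      rw [dist_comm, key r j 2]
      norm_num [hF]
    have e1 : ∀ j : ℕ, dist ((R ^ (j + 1)) • expI r) ((R ^ (j + 2)) • expI r) = F 1 r := by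
      intro j
      rw [dist_comm, show j + 2 = (j + 1) + 1 from rfl, key r (j + 1) 1]
      norm_num [hF]
    have e0 : dist ((R ^ 0) • expI r) ((R ^ n) • expI r) = 0 := by
      rw [dist_comm, show (R ^ n) = (R ^ (0 + n)) by rw [zero_add], key r 0 n]
      have hnθ : (n : ℝ) * θ = π := by
        rw [hθ]; field_simp
      rw [hnθ]
      simp
    simp only [tension, e2, e1, e0, Finset.sum_const, Finset.card_range, nsmul_eq_mul, sub_zero]
  -- bounds
  have hs1 : 0 ≤ Real.sin (1 * θ) := by
    apply Real.sin_nonneg_of_nonneg_of_le_pi (by linarith)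
    nlinarith
  have hs2 : 0 < Real.sin (2 * θ) := by
    apply Real.sin_pos_of_pos_of_lt_pi (by linarith)
    nlinarith
  have hs12 : Real.sin (1 * θ) ≤ Real.sin (2 * θ) := by
    apply Real.strictMonoOn_sin.monotoneOn ⟨by linarith, by linarith⟩ ⟨by linarith, by linarith⟩
    linarith
  have hF1nonneg : ∀ r, 0 ≤ F 1 r := by
    intro r
    have : 0 ≤ Real.arsinh (|Real.sin (1 * θ)| * |Real.sinh r|) :=
      Real.arsinh_nonneg_iff.mpr (by positivity)
    simp only [hF]; linarith
  have hF12 : ∀ r, F 1 r ≤ F 2 r := by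
    intro r
    simp only [hF]
    have habs : |Real.sin (1 * θ)| ≤ |Real.sin (2 * θ)| := by
      rw [abs_of_nonneg hs1, abs_of_pos hs2]; exact hs12
    have := Real.arsinh_le_arsinh.mpr
      (mul_le_mul_of_nonneg_right habs (abs_nonneg (Real.sinh r)))
    linarith
  have hcast : ((n - 1 : ℕ) : ℝ) = ((n - 2 : ℕ) : ℝ) + 1 := by
    have h' : n - 1 = (n - 2) + 1 := by omega
    rw [h']; push_cast; ring
  have hcast2 : (0:ℝ) ≤ ((n - 2 : ℕ) : ℝ) := Nat.cast_nonneg _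
  have hbound : ∀ r : ℝ, F 2 r ≤ tension n (fun k => R ^ k • expI r) := by
    intro r
    rw [htension r, hcast]
    nlinarith [hF12 r, hF1nonneg r]
  -- tendsto
  have ts : Tendsto Real.sinh atTop atTop :=
    Real.sinh_strictMono.monotone.tendsto_atTop_atTop fun b => ⟨Real.arsinh b, (Real.sinh_arsinh b).ge⟩
  have tabs : Tendsto (fun r => |Real.sinh r|) atTop atTop :=
    tendsto_atTop_mono (fun r => le_abs_self _) ts
  have hspos : 0 < |Real.sin (2 * θ)| := abs_pos.mpr hs2.ne'
  have tmul : Tendsto (fun r => |Real.sin (2 * θ)| * |Real.sinh r|) atTop atTop :=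
    tabs.const_mul_atTop hspos
  have ta : Tendsto Real.arsinh atTop atTop :=
    Real.arsinh_strictMono.monotone.tendsto_atTop_atTop fun b => ⟨Real.sinh b, (Real.arsinh_sinh b).ge⟩
  have tF2 : Tendsto (F 2) atTop atTop := by
    have := (ta.comp tmul).const_mul_atTop (two_pos (α := ℝ))
    simpa [hF, Function.comp] using this
  exact tendsto_atTop_mono hbound tF2
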